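/- For every integer k ≥ 1 and every positive integer n, the (2k+1)-st Bernoulli polynomial satisfies B_{2k+1}(n) = ((2k+1) / 2^(2k)) · Σ_{m=1}^{k} R(k,m) · C(2n+m-1, 2m+1), as an identity of rational numbers. -/

import Mathlib

open Finset

/-- `R k m = ∑_{j=0}^m (-1)^j C(2m, j) (m-j)^{2k}`, the sequence A304330. -/
def R (k m : ℕ) : ℤ :=
  ∑ j ∈ Finset.range (m + 1),
    (-1 : ℤ) ^ j * ((2 * m).choose j : ℤ) * (((m - j) ^ (2 * k) : ℕ) : ℤ)


lemma alt_vanish (N : ℕ) : ∀ i : ℕ, i < N →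
    ∑ j ∈ Finset.range (N+1), (-1:ℤ)^j * (N.choose j : ℤ) * (j:ℤ)^i = 0 := by
  induction N with
  | zero => intro i hi; omega
  | succ N ih =>
    intro i hi
    have key : ∑ j ∈ Finset.range (N+2), (-1:ℤ)^j * ((N+1).choose j : ℤ) * (j:ℤ)^i
        = ∑ j ∈ Finset.range (N+1), (-1:ℤ)^j * (N.choose j : ℤ) * ((j:ℤ)^i - ((j:ℤ)+1)^i) := by
      have split : ∀ j ∈ Finset.range (N+2), (-1:ℤ)^j * ((N+1).choose j : ℤ) * (j:ℤ)^i
          = (-1:ℤ)^j * (N.choose j : ℤ) * (j:ℤ)^i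
            + (-1:ℤ)^j * ((N+1).choose j - (N.choose j) : ℤ) * (j:ℤ)^i := by
        intro j _; ring
      rw [Finset.sum_congr rfl split, Finset.sum_add_distrib]
      have h1 : ∑ j ∈ Finset.range (N+2), (-1:ℤ)^j * (N.choose j : ℤ) * (j:ℤ)^i
          = ∑ j ∈ Finset.range (N+1), (-1:ℤ)^j * (N.choose j : ℤ) * (j:ℤ)^i := by
        rw [Finset.sum_range_succ]
        simp [Nat.choose_succ_self]
      have h2 : ∑ j ∈ Finset.range (N+2), (-1:ℤ)^j * ((N+1).choose j - (N.choose j) : ℤ) * (j:ℤ)^i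
          = ∑ j ∈ Finset.range (N+1), -((-1:ℤ)^j * (N.choose j : ℤ) * ((j:ℤ)+1)^i) := by
        rw [Finset.sum_range_succ']
        have h0 : ((-1:ℤ)^0 * (((N+1).choose 0 : ℤ) - (N.choose 0 : ℤ)) * ((0:ℕ):ℤ)^i) = 0 := by
          simp
        rw [h0, add_zero]
        apply Finset.sum_congr rfl
        intro j _
        have hc : (N+1).choose (j+1) = N.choose j + N.choose (j+1) := Nat.choose_succ_succ N j
        rw [hc]
        push_cast
        ring
      rw [h1, h2, ← Finset.sum_add_distrib]
      apply Finset.sum_congr rfl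
      intro j _; ring
    rw [key]
    have hpt : ∀ j : ℤ, (j:ℤ)^i - (j+1)^i = -∑ t ∈ Finset.range i, (i.choose t : ℤ) * j^t := by
      intro j
      have hb : (j+1)^i = ∑ t ∈ Finset.range (i+1), j^t * (i.choose t : ℤ) := by
        rw [add_pow]
        apply Finset.sum_congr rfl; intro t _; simp
      rw [hb, Finset.sum_range_succ]
      simp [mul_comm]
    have step : ∑ j ∈ Finset.range (N+1), (-1:ℤ)^j * (N.choose j : ℤ) * ((j:ℤ)^i - ((j:ℤ)+1)^i)
        = -∑ t ∈ Finset.range i, (i.choose t : ℤ) *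
            ∑ j ∈ Finset.range (N+1), (-1:ℤ)^j * (N.choose j : ℤ) * (j:ℤ)^t := by
      simp_rw [hpt, Finset.mul_sum, mul_neg, Finset.sum_neg_distrib]
      rw [Finset.sum_comm]
      congr 1
      apply Finset.sum_congr rfl; intro t _
      rw [Finset.mul_sum]
      apply Finset.sum_congr rfl; intro j _
      ring
    rw [step]
    have : ∀ t ∈ Finset.range i, (i.choose t : ℤ) *
        (∑ j ∈ Finset.range (N+1), (-1:ℤ)^j * (N.choose j : ℤ) * (j:ℤ)^t) = 0 := by
      intro t ht
      have ht' := Finset.mem_range.mp ht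
      rw [ih t (by omega : t < N), mul_zero]
    rw [Finset.sum_congr rfl this]
    simp

lemma Rcast (k m : ℕ) : R k m =
    ∑ j ∈ Finset.range (m + 1), (-1:ℤ)^j * ((2*m).choose j : ℤ) * ((m:ℤ) - j)^(2*k) := by
  unfold R
  apply Finset.sum_congr rfl
  intro j hj
  have hj' : j ≤ m := Finset.mem_range_succ_iff.mp hj
  congr 1
  push_cast [Nat.cast_sub hj']
  ring

lemma R_zero_right (k : ℕ) (hk : 1 ≤ k) : R k 0 = 0 := by
  unfold R
  simp [zero_pow (by omega : 2*k ≠ 0)]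

lemma R_eq_zero (k m : ℕ) (hk : 1 ≤ k) (hm : k < m) : R k m = 0 := by
  set f : ℕ → ℤ := fun j => (-1:ℤ)^j * ((2*m).choose j : ℤ) * ((m:ℤ) - j)^(2*k) with hf
  have hneg1 : ∀ j : ℕ, ((-1:ℤ))^j * (-1)^j = 1 := by
    intro j; rw [← pow_add]; exact Even.neg_one_pow ⟨j, rfl⟩
  have fsym : ∀ j ≤ 2*m, f (2*m - j) = f j := by
    intro j hj
    simp only [hf]
    have hcast : ((2*m - j : ℕ) : ℤ) = 2*(m:ℤ) - j := by push_cast [Nat.cast_sub hj]; ring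
    have hch : (2*m).choose (2*m - j) = (2*m).choose j := Nat.choose_symm hj
    have hsgn : ((-1:ℤ))^(2*m - j) = (-1)^j := by
      have h1 : ((-1:ℤ))^(2*m - j) * (-1)^j = (-1)^(2*m) := by
        rw [← pow_add]; congr 1; omega
      have h2 : ((-1:ℤ))^(2*m) = 1 := Even.neg_one_pow ⟨m, by ring⟩
      calc ((-1:ℤ))^(2*m - j) = ((-1:ℤ))^(2*m - j) * ((-1)^j * (-1)^j) := by
            rw [hneg1]; ring
        _ = ((-1:ℤ))^(2*m) * (-1)^j := by rw [← mul_assoc, h1]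
        _ = (-1)^j := by rw [h2, one_mul]
    rw [hch, hcast, hsgn]
    congr 1
    have : ((m:ℤ) - (2*(m:ℤ) - j)) = -((m:ℤ) - j) := by ring
    rw [this, Even.neg_pow ⟨k, by ring⟩]
  have hfm : f m = 0 := by
    simp only [hf, sub_self]
    rw [zero_pow (by omega : 2*k ≠ 0)]
    ring
  have hR : R k m = ∑ j ∈ Finset.range m, f j := by
    rw [Rcast]
    have hee : ∑ j ∈ Finset.range (m+1), (-1:ℤ)^j * ((2*m).choose j : ℤ) * ((m:ℤ) - j)^(2*k)
        = ∑ j ∈ Finset.range (m+1), f j := rfl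
    rw [hee, Finset.sum_range_succ, hfm, add_zero]
  set S : ℤ := ∑ j ∈ Finset.range (2*m+1), f j with hS
  have hm1 : 1 ≤ m := by omega
  have hsplit : S = (∑ j ∈ Finset.range (m+1), f j) + ∑ j ∈ Finset.Ico (m+1) (2*m+1), f j := by
    rw [hS, Finset.range_eq_Ico, ← Finset.sum_Ico_consecutive f (by omega : 0 ≤ m+1) (by omega : m+1 ≤ 2*m+1), ← Finset.range_eq_Ico]
  have h2nd : ∑ j ∈ Finset.Ico (m+1) (2*m+1), f j = ∑ j ∈ Finset.range m, f j := by
    rw [Finset.sum_Ico_eq_sum_range]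
    have hlen : 2*m+1 - (m+1) = m := by omega
    rw [hlen]
    rw [← Finset.sum_range_reflect f m]
    apply Finset.sum_congr rfl
    intro j hj
    have hjm : j < m := Finset.mem_range.mp hj
    have := fsym (m+1+j) (by omega)
    have he : 2*m - (m+1+j) = m - 1 - j := by omega
    rw [he] at this
    exact this.symm
  have hS2R : S = 2 * R k m := by
    rw [hsplit, h2nd, Finset.sum_range_succ, hfm, add_zero, hR]; ring
  have hSzero : S = 0 := by
    have hf2 : ∀ j ∈ Finset.range (2*m+1), f j = ∑ t ∈ Finset.range (2*k+1),
        ((m:ℤ)^t * (-1:ℤ)^(2*k-t) * ((2*k).choose t : ℤ)) *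
          ((-1:ℤ)^j * ((2*m).choose j : ℤ) * (j:ℤ)^(2*k-t)) := by
      intro j _
      simp only [hf]
      rw [sub_eq_add_neg, add_pow, Finset.mul_sum]
      apply Finset.sum_congr rfl
      intro t _
      rw [neg_pow]
      ring
    rw [hS, Finset.sum_congr rfl hf2, Finset.sum_comm]
    apply Finset.sum_eq_zero
    intro t _
    rw [← Finset.mul_sum]
    rw [alt_vanish (2*m) (2*k-t) (by omega), mul_zero]
  omega

lemma Rrec (k q : ℕ) :
    R (k+1) (q+1) = ((q:ℤ)+1)^2 * R k (q+1) + (2*(q:ℤ)+2)*(2*(q:ℤ)+1) * R k q := by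
  rw [Rcast, Rcast, Rcast]
  have expand : ∀ j ∈ Finset.range (q+1+1),
      (-1:ℤ)^j * (((2*(q+1)).choose j : ℤ)) * (((q+1:ℕ):ℤ) - j)^(2*(k+1))
      = ((q:ℤ)+1)^2 * ((-1:ℤ)^j * (((2*(q+1)).choose j : ℤ)) * (((q+1:ℕ):ℤ) - j)^(2*k))
        - (-1:ℤ)^j * (((2*(q+1)).choose j : ℤ)) * (j:ℤ) * (2*((q:ℤ)+1) - j) * (((q+1:ℕ):ℤ) - j)^(2*k) := by
    intro j _
    have hp : (((q+1:ℕ):ℤ) - j)^(2*(k+1)) = (((q+1:ℕ):ℤ) - j)^(2*k) * (((q+1:ℕ):ℤ) - j)^2 := by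
      rw [show 2*(k+1) = 2*k+2 from by ring, pow_add]
    rw [hp]
    push_cast
    ring
  rw [Finset.sum_congr rfl expand, Finset.sum_sub_distrib]
  have hT : ∑ j ∈ Finset.range (q+1+1),
      (-1:ℤ)^j * (((2*(q+1)).choose j : ℤ)) * (j:ℤ) * (2*((q:ℤ)+1) - j) * (((q+1:ℕ):ℤ) - j)^(2*k)
      = -((2*(q:ℤ)+2)*(2*(q:ℤ)+1) *
          ∑ j ∈ Finset.range (q+1), (-1:ℤ)^j * (((2*q).choose j : ℤ)) * (((q:ℕ):ℤ) - j)^(2*k)) := by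
    rw [Finset.sum_range_succ']
    have h0 : (-1:ℤ)^0 * (((2*(q+1)).choose 0 : ℤ)) * ((0:ℕ):ℤ) * (2*((q:ℤ)+1) - (0:ℕ)) * (((q+1:ℕ):ℤ) - (0:ℕ))^(2*k) = 0 := by
      simp
    rw [h0, add_zero]
    have hpt : ∀ j ∈ Finset.range (q+1),
        (-1:ℤ)^(j+1) * (((2*(q+1)).choose (j+1) : ℤ)) * ((j+1:ℕ):ℤ) * (2*((q:ℤ)+1) - ((j+1:ℕ):ℤ)) * (((q+1:ℕ):ℤ) - ((j+1:ℕ):ℤ))^(2*k)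
        = -((2*(q:ℤ)+2)*(2*(q:ℤ)+1) * ((-1:ℤ)^j * (((2*q).choose j : ℤ)) * (((q:ℕ):ℤ) - j)^(2*k))) := by
      intro j hj
      have hjq : j ≤ q := by have := Finset.mem_range.mp hj; omega
      have z1 : ((2*q+2 : ℤ)) * ((2*q+1).choose j : ℤ) = ((2*q+2).choose (j+1) : ℤ) * ((j:ℤ)+1) := by
        have := Nat.add_one_mul_choose_eq (2*q+1) j
        exact_mod_cast this
      have z2 : ((2*q+1 : ℤ)) * ((2*q).choose j : ℤ) = ((2*q+1).choose (j+1) : ℤ) * ((j:ℤ)+1) := by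
        have := Nat.add_one_mul_choose_eq (2*q) j
        exact_mod_cast this
      have z3 : ((2*q+1).choose (j+1) : ℤ) * ((j:ℤ)+1) = ((2*q+1).choose j : ℤ) * (2*(q:ℤ)+1-j) := by
        have h := Nat.choose_succ_right_eq (2*q+1) j
        have hc : ((2*q+1 - j : ℕ) : ℤ) = 2*(q:ℤ)+1-j := by
          push_cast [Nat.cast_sub (by omega : j ≤ 2*q+1)]; ring
        calc ((2*q+1).choose (j+1) : ℤ) * ((j:ℤ)+1)
            = (((2*q+1).choose (j+1) * (j+1) : ℕ) : ℤ) := by push_cast; ring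
          _ = (((2*q+1).choose j * (2*q+1-j) : ℕ) : ℤ) := by rw [h]
          _ = ((2*q+1).choose j : ℤ) * (2*(q:ℤ)+1-j) := by push_cast [Nat.cast_sub (by omega : j ≤ 2*q+1)]; ring
      have hz : ((2*(q+1)).choose (j+1) : ℤ) * ((j:ℤ)+1) * (2*(q:ℤ)+1-j)
          = (2*(q:ℤ)+2)*(2*(q:ℤ)+1) * ((2*q).choose j : ℤ) := by
        have h2q : (2*(q+1)) = 2*q+2 := by ring
        rw [h2q]
        linear_combination (-(2*(q:ℤ)+1-(j:ℤ))) * z1 + (-(2*(q:ℤ)+2)) * z3 + (-(2*(q:ℤ)+2)) * z2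
      push_cast
      push_cast at hz
      linear_combination (-(-1:ℤ)^j * ((q:ℤ) - j)^(2*k)) * hz
    rw [Finset.sum_congr rfl hpt]
    rw [Finset.sum_neg_distrib, ← Finset.mul_sum]
  rw [hT]
  rw [← Finset.mul_sum]
  push_cast
  ring

lemma BL (x q : ℕ) :
    (x:ℤ)^2 * (((x+q+1).choose (2*q+2) : ℤ) + ((x+q).choose (2*q+2) : ℤ))
      = (2*(q:ℤ)+4)*(2*(q:ℤ)+3) * (((x+q+2).choose (2*q+4) : ℤ) + ((x+q+1).choose (2*q+4) : ℤ))
        + ((q:ℤ)+1)^2 * (((x+q+1).choose (2*q+2) : ℤ) + ((x+q).choose (2*q+2) : ℤ)) := by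
  rcases lt_trichotomy x (q+1) with hx | hx | hx
  · -- x ≤ q : all choose vanish
    rw [Nat.choose_eq_zero_of_lt (by omega : x+q+1 < 2*q+2),
        Nat.choose_eq_zero_of_lt (by omega : x+q < 2*q+2),
        Nat.choose_eq_zero_of_lt (by omega : x+q+2 < 2*q+4),
        Nat.choose_eq_zero_of_lt (by omega : x+q+1 < 2*q+4)]
    push_cast; ring
  · -- x = q+1
    subst hx
    rw [show q+1+q+1 = 2*q+2 from by ring, Nat.choose_self,
        Nat.choose_eq_zero_of_lt (by omega : q+1+q < 2*q+2),
        Nat.choose_eq_zero_of_lt (by omega : q+1+q+2 < 2*q+4),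
        Nat.choose_eq_zero_of_lt (by omega : 2*q+2 < 2*q+4)]
    push_cast; ring
  · -- x ≥ q+2
    have hxq : q+2 ≤ x := hx
    have z2 : ((x:ℤ)+q+1) * ((x+q).choose (2*q+2) : ℤ)
        = ((x+q+1).choose (2*q+3) : ℤ) * (2*(q:ℤ)+3) := by
      have h := Nat.add_one_mul_choose_eq (x+q) (2*q+2)
      have e : 2*q+2+1 = 2*q+3 := by omega
      rw [e] at h
      exact_mod_cast h
    have z1 : ((x:ℤ)+q+2) * ((x+q+1).choose (2*q+3) : ℤ)
        = ((x+q+2).choose (2*q+4) : ℤ) * (2*(q:ℤ)+4) := by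
      have h := Nat.add_one_mul_choose_eq (x+q+1) (2*q+3)
      have e : 2*q+3+1 = 2*q+4 := by omega
      rw [e] at h
      exact_mod_cast h
    have zF1 : ((x:ℤ)+q+1) * ((x+q).choose (2*q+3) : ℤ)
        = ((x+q+1).choose (2*q+4) : ℤ) * (2*(q:ℤ)+4) := by
      have h := Nat.add_one_mul_choose_eq (x+q) (2*q+3)
      have e : 2*q+3+1 = 2*q+4 := by omega
      rw [e] at h
      exact_mod_cast h
    have zF2 : ((x+q).choose (2*q+3) : ℤ) * (2*(q:ℤ)+3)
        = ((x+q).choose (2*q+2) : ℤ) * ((x:ℤ)-q-2) := by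
      have h := Nat.choose_succ_right_eq (x+q) (2*q+2)
      have e : 2*q+2+1 = 2*q+3 := by omega
      rw [e] at h
      have harith : x+q-(2*q+2) = x-(q+2) := by omega
      rw [harith] at h
      have hc := congrArg (Nat.cast (R := ℤ)) h
      push_cast [Nat.cast_sub (by omega : q+2 ≤ x)] at hc
      linear_combination hc
    have zA : ((x+q+1).choose (2*q+3) : ℤ) * (2*(q:ℤ)+3)
        = ((x+q+1).choose (2*q+2) : ℤ) * ((x:ℤ)-q-1) := by
      have h := Nat.choose_succ_right_eq (x+q+1) (2*q+2)
      have e : 2*q+2+1 = 2*q+3 := by omega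
      rw [e] at h
      have harith : x+q+1-(2*q+2) = x-(q+1) := by omega
      rw [harith] at h
      have hc := congrArg (Nat.cast (R := ℤ)) h
      push_cast [Nat.cast_sub (by omega : q+1 ≤ x)] at hc
      linear_combination hc
    linear_combination (2*(q:ℤ)+3)*z1 + z2 + (2*(q:ℤ)+3)*zF1 - ((x:ℤ)+q+1)*zF2 - ((x:ℤ)+q+1)*zA

lemma p1 (x : ℕ) : ((x+1).choose 2 : ℤ) + (x.choose 2 : ℤ) = (x:ℤ)^2 := by
  induction x with
  | zero => simp
  | succ x ih =>
    have h1 : (x+2).choose 2 = (x+1).choose 1 + (x+1).choose 2 := Nat.choose_succ_succ (x+1) 1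
    have h2 : (x+1).choose 2 = x.choose 1 + x.choose 2 := Nat.choose_succ_succ x 1
    rw [show x+1+1 = x+2 from rfl, h1]
    rw [h2] at ih ⊢
    push_cast [Nat.choose_one_right]
    push_cast [Nat.choose_one_right] at ih
    linear_combination ih

lemma KL (k : ℕ) (hk : 1 ≤ k) : ∀ x : ℕ,
    ∑ q ∈ Finset.range k, R k (q+1) *
      (((x+q+1).choose (2*q+2) : ℤ) + ((x+q).choose (2*q+2) : ℤ)) = (x:ℤ)^(2*k) := by
  induction k, hk using Nat.le_induction with
  | base =>
    intro x
    rw [Finset.sum_range_one]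
    have hR11 : R 1 1 = 1 := by
      unfold R
      rw [Finset.sum_range_succ, Finset.sum_range_succ, Finset.sum_range_zero]
      norm_num
    rw [hR11, one_mul]
    rw [show 2*0+2 = 2 from rfl, show x+0+1 = x+1 from rfl, show x+0 = x from rfl]
    rw [p1]
  | succ k hk ih =>
    intro x
    have step1 : ∀ q ∈ Finset.range (k+1),
        R (k+1) (q+1) * (((x+q+1).choose (2*q+2) : ℤ) + ((x+q).choose (2*q+2) : ℤ))
        = ((q:ℤ)+1)^2 * R k (q+1) * (((x+q+1).choose (2*q+2) : ℤ) + ((x+q).choose (2*q+2) : ℤ))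
          + (2*(q:ℤ)+2)*(2*(q:ℤ)+1) * R k q * (((x+q+1).choose (2*q+2) : ℤ) + ((x+q).choose (2*q+2) : ℤ)) := by
      intro q _
      rw [Rrec]; ring
    rw [Finset.sum_congr rfl step1, Finset.sum_add_distrib]
    -- first sum: drop the q = k term using R_eq_zero
    have first : ∑ q ∈ Finset.range (k+1),
        ((q:ℤ)+1)^2 * R k (q+1) * (((x+q+1).choose (2*q+2) : ℤ) + ((x+q).choose (2*q+2) : ℤ))
        = ∑ q ∈ Finset.range k,
        ((q:ℤ)+1)^2 * R k (q+1) * (((x+q+1).choose (2*q+2) : ℤ) + ((x+q).choose (2*q+2) : ℤ)) := by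
      rw [Finset.sum_range_succ, R_eq_zero k (k+1) hk (by omega)]
      simp
    -- second sum: shift index, q = 0 term dies since R k 0 = 0
    have second : ∑ q ∈ Finset.range (k+1),
        (2*(q:ℤ)+2)*(2*(q:ℤ)+1) * R k q * (((x+q+1).choose (2*q+2) : ℤ) + ((x+q).choose (2*q+2) : ℤ))
        = ∑ q ∈ Finset.range k,
        (2*(q:ℤ)+4)*(2*(q:ℤ)+3) * R k (q+1) * (((x+q+2).choose (2*q+4) : ℤ) + ((x+q+1).choose (2*q+4) : ℤ)) := by
      rw [Finset.sum_range_succ']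
      rw [R_zero_right k hk]
      have hz : (2*((0:ℕ):ℤ)+2)*(2*((0:ℕ):ℤ)+1) * 0 * (((x+0+1).choose (2*0+2) : ℤ) + ((x+0).choose (2*0+2) : ℤ)) = 0 := by ring
      rw [hz, add_zero]
      apply Finset.sum_congr rfl
      intro q _
      have e1 : x+(q+1)+1 = x+q+2 := by omega
      have e2 : x+(q+1) = x+q+1 := by omega
      have e3 : 2*(q+1)+2 = 2*q+4 := by omega
      rw [e1, e2, e3]
      push_cast
      ring
    rw [first, second, ← Finset.sum_add_distrib]
    have combine : ∀ q ∈ Finset.range k,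
        ((q:ℤ)+1)^2 * R k (q+1) * (((x+q+1).choose (2*q+2) : ℤ) + ((x+q).choose (2*q+2) : ℤ))
          + (2*(q:ℤ)+4)*(2*(q:ℤ)+3) * R k (q+1) * (((x+q+2).choose (2*q+4) : ℤ) + ((x+q+1).choose (2*q+4) : ℤ))
        = (x:ℤ)^2 * (R k (q+1) * (((x+q+1).choose (2*q+2) : ℤ) + ((x+q).choose (2*q+2) : ℤ))) := by
      intro q _
      have h := BL x q
      linear_combination (-(R k (q+1))) * h
    rw [Finset.sum_congr rfl combine, ← Finset.mul_sum, ih x]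
    rw [← pow_add]
    congr 1
    ring

lemma tele (q : ℕ) : ∀ n : ℕ, ((2*n+q).choose (2*q+3) : ℤ)
    = ∑ t ∈ Finset.range n, (((2*t+q+1).choose (2*q+2) : ℤ) + ((2*t+q).choose (2*q+2) : ℤ)) := by
  intro n
  induction n with
  | zero =>
    simp [Nat.choose_eq_zero_of_lt (by omega : q < 2*q+3)]
  | succ n ih =>
    rw [Finset.sum_range_succ, ← ih]
    rw [show 2*(n+1)+q = 2*n+q+2 from by ring]
    have h1 : (2*n+q+2).choose (2*q+3)
        = (2*n+q+1).choose (2*q+2) + (2*n+q+1).choose (2*q+3) :=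
      Nat.choose_succ_succ (2*n+q+1) (2*q+2)
    have h2 : (2*n+q+1).choose (2*q+3)
        = (2*n+q).choose (2*q+2) + (2*n+q).choose (2*q+3) :=
      Nat.choose_succ_succ (2*n+q) (2*q+2)
    rw [h1, h2]
    push_cast
    ring

lemma main_sum (k n : ℕ) (hk : 1 ≤ k) :
    ∑ q ∈ Finset.range k, R k (q+1) * ((2*n+q).choose (2*q+3) : ℤ)
      = ∑ t ∈ Finset.range n, ((2*t : ℕ) : ℤ)^(2*k) := by
  have step : ∀ q ∈ Finset.range k, R k (q+1) * ((2*n+q).choose (2*q+3) : ℤ)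
      = ∑ t ∈ Finset.range n,
          R k (q+1) * (((2*t+q+1).choose (2*q+2) : ℤ) + ((2*t+q).choose (2*q+2) : ℤ)) := by
    intro q _
    rw [tele q n, Finset.mul_sum]
  rw [Finset.sum_congr rfl step, Finset.sum_comm]
  apply Finset.sum_congr rfl
  intro t _
  exact KL k hk (2*t)

theorem stmt_8 (k n : ℕ) (hk : 1 ≤ k) (hn : 1 ≤ n) :
    (Polynomial.bernoulli (2 * k + 1)).eval (n : ℚ) =
      ((2 * k + 1 : ℚ) / 2 ^ (2 * k)) *
        ∑ m ∈ Finset.Icc 1 k, (R k m : ℚ) * ((2 * n + m - 1).choose (2 * m + 1) : ℚ) := by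
  have hodd : _root_.bernoulli (2*k+1) = 0 := by
    rw [bernoulli_eq_bernoulli'_of_ne_one (by omega)]
    exact bernoulli'_eq_zero_of_odd ⟨k, by ring⟩ (by omega)
  have hb := Polynomial.bernoulli_succ_eval n (2*k)
  simp only [Nat.succ_eq_add_one] at hb
  have hIcc : ∑ m ∈ Finset.Icc 1 k, (R k m : ℚ) * ((2*n+m-1).choose (2*m+1) : ℚ)
      = ∑ q ∈ Finset.range k, (R k (q+1) : ℚ) * ((2*n+q).choose (2*q+3) : ℚ) := by
    rw [← Finset.Ico_add_one_right_eq_Icc, Finset.sum_Ico_eq_sum_range]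
    apply Finset.sum_congr (by rw [show k+1-1 = k from rfl])
    intro q _
    rw [show 2*n+(1+q)-1 = 2*n+q from by omega, show 2*(1+q)+1 = 2*q+3 from by omega,
        show 1+q = q+1 from by omega]
  have hZ := main_sum k n hk
  have hQ : ∑ q ∈ Finset.range k, (R k (q+1) : ℚ) * ((2*n+q).choose (2*q+3) : ℚ)
      = 2^(2*k) * ∑ t ∈ Finset.range n, (t:ℚ)^(2*k) := by
    have hc := congrArg (fun z : ℤ => (z : ℚ)) hZ
    push_cast at hc
    rw [hc, Finset.mul_sum]
    apply Finset.sum_congr rfl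
    intro t _
    rw [mul_pow]
  rw [hb, hodd, hIcc, hQ]
  have h2 : (2:ℚ)^(2*k) ≠ 0 := by positivity
  field_simp
  push_cast
  ring
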